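/- For every real number q > 1, the integral over x ∈ [−2, 2] of (1/((1 + q^{−1})² − x²·q^{−1}))·√(4−x²)/(2π) with respect to Lebesgue measure equals q/(q+1). -/

import Mathlib

open Real intervalIntegral MeasureTheory

set_option maxHeartbeats 1000000 in
lemma key_integral (t : ℝ) (ht0 : 0 < t) (ht1 : t < 1) :
    ∫ x in (-2 : ℝ)..2, Real.sqrt (4 - x ^ 2) / ((1 + t) ^ 2 - t * x ^ 2) =
      2 * Real.pi / (1 + t) := by
  have h1t : 0 < 1 + t := by linarith
  have hDpos : ∀ x ∈ Set.Icc (-2 : ℝ) 2, 0 < (1 + t) ^ 2 - t * x ^ 2 := by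
    intro x hx
    have hx2 : x ^ 2 ≤ 4 := by nlinarith [hx.1, hx.2]
    nlinarith
  set g : ℝ → ℝ := fun x => (1 - t) * x / (2 * Real.sqrt ((1 + t) ^ 2 - t * x ^ 2)) with hg
  set F : ℝ → ℝ := fun x =>
    (Real.arcsin (x / 2) - (1 - t) / (1 + t) * Real.arcsin (g x)) / t with hF
  have hcont : ContinuousOn F (Set.Icc (-2 : ℝ) 2) := by
    have hcg : ContinuousOn g (Set.Icc (-2 : ℝ) 2) := by
      apply ContinuousOn.div (by fun_prop)
      · fun_prop
      · intro x hx
        have := hDpos x hx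
        positivity
    exact (((Real.continuous_arcsin.comp (continuous_id.div_const 2)).continuousOn).sub
      (continuousOn_const.mul (Real.continuous_arcsin.comp_continuousOn hcg))).div_const t
  have hderiv : ∀ x ∈ Set.Ioo (-2 : ℝ) 2,
      HasDerivAt F (Real.sqrt (4 - x ^ 2) / ((1 + t) ^ 2 - t * x ^ 2)) x := by
    intro x hx
    have hx2 : x ^ 2 < 4 := by nlinarith [hx.1, hx.2]
    have hD : 0 < (1 + t) ^ 2 - t * x ^ 2 := by nlinarith
    set r : ℝ := Real.sqrt ((1 + t) ^ 2 - t * x ^ 2) with hrdef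
    have hr0 : 0 < r := Real.sqrt_pos.mpr hD
    have hr2 : r ^ 2 = (1 + t) ^ 2 - t * x ^ 2 := Real.sq_sqrt hD.le
    set s : ℝ := Real.sqrt (4 - x ^ 2) with hsdef
    have hs0 : 0 < s := Real.sqrt_pos.mpr (by linarith)
    have hs2 : s ^ 2 = 4 - x ^ 2 := Real.sq_sqrt (by linarith)
    -- derivative of inner square root
    have hDder : HasDerivAt (fun y : ℝ => (1 + t) ^ 2 - t * y ^ 2) (-(t * (2 * x))) x := by
      have := ((hasDerivAt_pow 2 x).const_mul t).const_sub ((1 + t) ^ 2)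
      simpa using this
    have hsqrtder : HasDerivAt (fun y : ℝ => Real.sqrt ((1 + t) ^ 2 - t * y ^ 2))
        (-(t * (2 * x)) / (2 * r)) x := hDder.sqrt (by simpa using hD.ne')
    -- derivative of g
    have hnum : HasDerivAt (fun y : ℝ => (1 - t) * y) (1 - t) x := by
      simpa using (hasDerivAt_id x).const_mul (1 - t)
    have hden : HasDerivAt (fun y : ℝ => 2 * Real.sqrt ((1 + t) ^ 2 - t * y ^ 2))
        (2 * (-(t * (2 * x)) / (2 * r))) x := hsqrtder.const_mul 2
    have hgder : HasDerivAt g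
        (((1 - t) * (2 * r) - (1 - t) * x * (2 * (-(t * (2 * x)) / (2 * r)))) / (2 * r) ^ 2) x := by
      exact hnum.div hden (by positivity)
    -- bounds on g x
    have hgx : g x = (1 - t) * x / (2 * r) := rfl
    have hgabs : (g x) ^ 2 < 1 := by
      rw [hgx, div_pow, div_lt_one (by positivity)]
      nlinarith [mul_pos (pow_pos h1t 2) (show (0:ℝ) < 4 - x ^ 2 by linarith), hr2]
    have hg1 : g x ≠ 1 := by nlinarith [hgabs]
    have hg1' : g x ≠ -1 := by nlinarith [hgabs]
    -- arcsin of g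
    have harcg : HasDerivAt (fun y => Real.arcsin (g y))
        (1 / Real.sqrt (1 - (g x) ^ 2) *
          (((1 - t) * (2 * r) - (1 - t) * x * (2 * (-(t * (2 * x)) / (2 * r)))) / (2 * r) ^ 2)) x :=
      (Real.hasDerivAt_arcsin hg1' hg1).comp x hgder
    have hx1 : x / 2 ≠ 1 := by intro h; nlinarith [hx.2]
    have hx1' : x / 2 ≠ -1 := by intro h; nlinarith [hx.1]
    have harc1 : HasDerivAt (fun y : ℝ => Real.arcsin (y / 2))
        (1 / Real.sqrt (1 - (x / 2) ^ 2) * (1 / 2)) x := by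
      have h2 : HasDerivAt (fun y : ℝ => y / 2) (1 / 2) x := by
        simpa using (hasDerivAt_id x).div_const 2
      exact (Real.hasDerivAt_arcsin hx1' hx1).comp x h2
    have hFder := (harc1.sub (harcg.const_mul ((1 - t) / (1 + t)))).div_const t
    -- identify the derivative value
    have e1 : Real.sqrt (1 - (x / 2) ^ 2) = s / 2 := by
      rw [show (1:ℝ) - (x / 2) ^ 2 = (s / 2) ^ 2 by rw [div_pow, div_pow, hs2]; ring]
      exact Real.sqrt_sq (by positivity)
    have e2 : Real.sqrt (1 - (g x) ^ 2) = (1 + t) * s / (2 * r) := by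
      rw [show (1:ℝ) - (g x) ^ 2 = ((1 + t) * s / (2 * r)) ^ 2 by
        rw [hgx, div_pow, div_pow, mul_pow, mul_pow, mul_pow, hr2, hs2]
        have hDne : ((1:ℝ) + t) ^ 2 - t * x ^ 2 ≠ 0 := hD.ne'
        field_simp
        ring]
      exact Real.sqrt_sq (by positivity)
    have hN : (1 - t) * (2 * r) - (1 - t) * x * (2 * (-(t * (2 * x)) / (2 * r))) =
        2 * (1 - t) * (1 + t) ^ 2 / r := by
      field_simp
      linear_combination (1 - t) * hr2
    rw [e1, e2, hN] at hFder
    refine hFder.congr_deriv ?_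
    rw [← hr2]
    field_simp
    linear_combination hr2 - t * hs2
  have hint : IntervalIntegrable (fun x => Real.sqrt (4 - x ^ 2) / ((1 + t) ^ 2 - t * x ^ 2))
      volume (-2) 2 := by
    apply ContinuousOn.intervalIntegrable
    rw [Set.uIcc_of_le (by norm_num)]
    apply ContinuousOn.div (by fun_prop) (by fun_prop)
    intro x hx; exact (hDpos x hx).ne'
  rw [intervalIntegral.integral_eq_sub_of_hasDerivAt_of_le (by norm_num) hcont hderiv hint]
  have hg2 : g 2 = 1 := by
    have h : (1 + t) ^ 2 - t * (2:ℝ) ^ 2 = (1 - t) ^ 2 := by ring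
    rw [hg]; simp only [h, Real.sqrt_sq (by linarith : (0:ℝ) ≤ 1 - t)]
    rw [div_eq_one_iff_eq (show (2 * (1 - t) : ℝ) ≠ 0 from ne_of_gt (by linarith))]; ring
  have hgm2 : g (-2) = -1 := by
    have h : (1 + t) ^ 2 - t * (-2:ℝ) ^ 2 = (1 - t) ^ 2 := by ring
    rw [hg]; simp only [h, Real.sqrt_sq (by linarith : (0:ℝ) ≤ 1 - t)]
    rw [div_eq_iff (show (2 * (1 - t) : ℝ) ≠ 0 from ne_of_gt (by linarith))]; ring
  simp only [hF, hg2, hgm2, Real.arcsin_one, Real.arcsin_neg_one]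
  field_simp
  simp only [Real.arcsin_one, Real.arcsin_neg_one]
  ring

/-- The total mass of the measure `μ_{𝔭,E,Ω}` at an inert prime of residue cardinality `q`
equals `q/(q+1) = L(1, η_𝔭)`. -/
theorem total_mass_inert_measure (q : ℝ) (hq : 1 < q) :
    ∫ x in (-2 : ℝ)..2,
        (1 / ((1 + q⁻¹) ^ 2 - x ^ 2 * q⁻¹)) * (Real.sqrt (4 - x ^ 2) / (2 * Real.pi)) =
      q / (q + 1) := by
  have hq0 : (0:ℝ) < q := by linarith
  have ht0 : 0 < q⁻¹ := by positivity
  have ht1 : q⁻¹ < 1 := by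
    rw [inv_lt_one_iff₀]; right; exact hq
  have hkey := key_integral q⁻¹ ht0 ht1
  have hrw : Set.EqOn
      (fun x : ℝ => (1 / ((1 + q⁻¹) ^ 2 - x ^ 2 * q⁻¹)) * (Real.sqrt (4 - x ^ 2) / (2 * Real.pi)))
      (fun x : ℝ => (2 * Real.pi)⁻¹ * (Real.sqrt (4 - x ^ 2) / ((1 + q⁻¹) ^ 2 - q⁻¹ * x ^ 2)))
      (Set.uIcc (-2 : ℝ) 2) := by
    intro x _
    simp only
    rw [mul_comm (x ^ 2) q⁻¹]
    ring
  rw [intervalIntegral.integral_congr hrw, intervalIntegral.integral_const_mul, hkey]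
  have hpi : Real.pi ≠ 0 := Real.pi_ne_zero
  have hq1 : q + 1 ≠ 0 := by positivity
  field_simp
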